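/- For n ≥ 3, let J be a φ_n-injective quiver with nonempty vertex set. Then J is loaded (for every pair of vertices v, w there is an edge from v to w) if and only if J is weakly connected and has at least one vertex with a loop. -/

import Mathlib

/-- A quiver: vertex set, edge set, source and target maps. -/
structure Quiv where
  V : Type
  E : Type
  s : E → V
  t : E → V

/-- A quiver homomorphism. -/
@[ext]
structure QuivHom (G H : Quiv) where
  onV : G.V → H.V
  onE : G.E → H.E
  comm_s : ∀ e, H.s (onE e) = onV (G.s e)
  comm_t : ∀ e, H.t (onE e) = onV (G.t e)

/-- Identity quiver homomorphism. -/
def QuivHom.id (G : Quiv) : QuivHom G G :=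
  ⟨_root_.id, _root_.id, fun _ => rfl, fun _ => rfl⟩

/-- Composition of quiver homomorphisms. -/
def QuivHom.comp {G H K : Quiv} (g : QuivHom H K) (f : QuivHom G H) : QuivHom G K :=
  ⟨g.onV ∘ f.onV, g.onE ∘ f.onE,
    fun e => by simp [Function.comp, g.comm_s, f.comm_s],
    fun e => by simp [Function.comp, g.comm_t, f.comm_t]⟩

/-- The directed path `P_n` with vertices `a_0, …, a_{n-1}` and edges `a_i → a_{i+1}`. -/
def Quiv.path (n : ℕ) : Quiv :=
  ⟨Fin n, Fin (n - 1), fun i => ⟨i.val, by have := i.isLt; omega⟩,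
    fun i => ⟨i.val + 1, by have := i.isLt; omega⟩⟩

/-- The directed cycle `C_n`. -/
def Quiv.cyc (n : ℕ) : Quiv :=
  ⟨Fin n, Fin n, _root_.id, fun i => ⟨(i.val + 1) % n, Nat.mod_lt _ i.pos⟩⟩

/-- The natural embedding `φ_n : P_n → C_n`. -/
def pathEmb (n : ℕ) : QuivHom (Quiv.path n) (Quiv.cyc n) where
  onV := _root_.id
  onE := fun i => ⟨i.val, by have := i.isLt; omega⟩
  comm_s := fun e => rfl
  comm_t := fun e => by
    have he := e.isLt
    apply Fin.ext
    show (e.val + 1) % n = e.val + 1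
    exact Nat.mod_eq_of_lt (by omega)

/-- `J` is `φ_n`-injective: every quiver map `P_n → J` factors through `φ_n`. -/
def PhiInj (n : ℕ) (J : Quiv) : Prop :=
  ∀ ψ : QuivHom (Quiv.path n) J, ∃ ψ' : QuivHom (Quiv.cyc n) J,
    ψ'.comp (pathEmb n) = ψ

/-- `v, e` form a walk of length `k` in `J` (only indices `< k` matter). -/
def HasWalk (J : Quiv) (k : ℕ) (v : ℕ → J.V) (e : ℕ → J.E) : Prop :=
  ∀ i < k, J.s (e i) = v i ∧ J.t (e i) = v (i + 1)

/-- There is an edge from `a` to `b` in `J`. -/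
def Quiv.Edge (J : Quiv) (a b : J.V) : Prop := ∃ f, J.s f = a ∧ J.t f = b

/-- A loaded quiver: an edge between every (ordered) pair of vertices. -/
def Quiv.Loaded (J : Quiv) : Prop := ∀ a b, J.Edge a b

/-- `H`, with partitions `A` of its vertices and `B` of its edges indexed by the
vertices and edges of `G`, is a blow-up of `G`. -/
def IsBlowup (G H : Quiv) (A : G.V → Set H.V) (B : G.E → Set H.E) : Prop :=
  (∀ w, ∃! v, w ∈ A v) ∧ (∀ f, ∃! e, f ∈ B e) ∧
  (∀ e f, f ∈ B e → H.s f ∈ A (G.s e) ∧ H.t f ∈ A (G.t e)) ∧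
  (∀ e x y, x ∈ A (G.s e) → y ∈ A (G.t e) → ∃ f ∈ B e, H.s f = x ∧ H.t f = y)

/-- Monomorphisms of quivers: injective vertex and edge maps. -/
def QuivHom.Mono {G H : Quiv} (f : QuivHom G H) : Prop :=
  Function.Injective f.onV ∧ Function.Injective f.onE

/-- A class of quiver morphisms. -/
def MorClass := ∀ D C : Quiv, Set (QuivHom D C)

/-- `J` is injective with respect to a class of morphisms `Φ`. -/
def ClassInjective (Φ : MorClass) (J : Quiv) : Prop :=
  ∀ D C (φ : QuivHom D C), φ ∈ Φ D C → ∀ ψ : QuivHom D J,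
    ∃ ψ' : QuivHom C J, ψ'.comp φ = ψ

/-- Undirected adjacency. -/
def Quiv.Adj (J : Quiv) (a b : J.V) : Prop := J.Edge a b ∨ J.Edge b a

/-- Weak connectivity. -/
def Quiv.WeaklyConnected (J : Quiv) : Prop :=
  ∀ a b : J.V, Relation.ReflTransGen J.Adj a b

/-- `J` has a closed walk of length `m`. -/
def ClosedWalk (J : Quiv) (m : ℕ) : Prop :=
  ∃ v e, HasWalk J m v e ∧ v m = v 0

/-- Cyclic successor on `Fin ℓ`. -/
def finNext {ℓ : ℕ} (i : Fin ℓ) : Fin ℓ := ⟨(i.val + 1) % ℓ, Nat.mod_lt _ i.pos⟩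

/-- Disjoint union (coproduct) of a family of quivers. -/
def Quiv.sigma {Λ : Type} (Jf : Λ → Quiv) : Quiv :=
  ⟨Σ l, (Jf l).V, Σ l, (Jf l).E,
    fun f => ⟨f.1, (Jf f.1).s f.2⟩, fun f => ⟨f.1, (Jf f.1).t f.2⟩⟩

/-- From a walk with `n-1` edges, `φ_n`-injectivity yields an edge from the
terminal vertex back to the initial one. -/
lemma walkEdge (n : ℕ) (hn : 3 ≤ n) (J : Quiv) (hJ : PhiInj n J)
    (v : ℕ → J.V) (e : ℕ → J.E)
    (h : ∀ i < n - 1, J.s (e i) = v i ∧ J.t (e i) = v (i + 1)) :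
    J.Edge (v (n - 1)) (v 0) := by
  set ψ : QuivHom (Quiv.path n) J :=
    ⟨fun i => v i.val, fun i => e i.val,
      fun i => (h i.val i.isLt).1, fun i => (h i.val i.isLt).2⟩ with hψdef
  obtain ⟨ψ', hψ'⟩ := hJ ψ
  have hv : ∀ i : Fin n, ψ'.onV i = v i.val := by
    intro i
    have := congrArg (fun g : QuivHom (Quiv.path n) J => g.onV i) hψ'
    simp [QuivHom.comp, pathEmb, hψdef] at this; exact this
  refine ⟨ψ'.onE ⟨n - 1, by omega⟩, ?_, ?_⟩
  · have := ψ'.comm_s ⟨n - 1, by omega⟩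
    rw [this]
    exact hv ⟨n - 1, by omega⟩
  · have := ψ'.comm_t ⟨n - 1, by omega⟩
    rw [this]
    have h0 : ((Quiv.cyc n).t ⟨n - 1, by omega⟩) = (⟨0, by omega⟩ : Fin n) := by
      apply Fin.ext
      show (n - 1 + 1) % n = 0
      have : n - 1 + 1 = n := by omega
      rw [this, Nat.mod_self]
    rw [h0, hv]

/-- Symmetrization: an edge `x → y` plus a loop at `y` yields an edge `y → x`. -/
lemma edgeSym (n : ℕ) (hn : 3 ≤ n) (J : Quiv) (hJ : PhiInj n J)
    {x y : J.V} (hxy : J.Edge x y) (hyy : J.Edge y y) : J.Edge y x := by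
  obtain ⟨f, hf1, hf2⟩ := hxy
  obtain ⟨g, hg1, hg2⟩ := hyy
  have key := walkEdge n hn J hJ (fun i => if i = 0 then x else y)
    (fun i => if i = 0 then f else g) ?_
  · simpa [show n - 1 ≠ 0 by omega] using key
  · intro i hi
    rcases Nat.eq_zero_or_pos i with rfl | hpos
    · simp [hf1, hf2]
    · simp [Nat.pos_iff_ne_zero.mp hpos, hg1, hg2, Nat.succ_ne_zero]

/-- Loop transfer: an edge `x → y` plus a loop at `y` yields a loop at `x`. -/
lemma loopTransfer (n : ℕ) (hn : 3 ≤ n) (J : Quiv) (hJ : PhiInj n J)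
    {x y : J.V} (hxy : J.Edge x y) (hyy : J.Edge y y) : J.Edge x x := by
  obtain ⟨f, hf1, hf2⟩ := hxy
  obtain ⟨g, hg1, hg2⟩ := hyy
  obtain ⟨h, hh1, hh2⟩ := edgeSym n hn J hJ ⟨f, hf1, hf2⟩ ⟨g, hg1, hg2⟩
  have key := walkEdge n hn J hJ
    (fun i => if i = 0 ∨ i = n - 1 then x else y)
    (fun i => if i = 0 then f else if i = n - 2 then h else g) ?_
  · simpa using key
  · intro i hi
    rcases Nat.eq_zero_or_pos i with rfl | hpos
    · refine ⟨?_, ?_⟩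
      · beta_reduce; rw [if_pos rfl, if_pos (Or.inl rfl), hf1]
      · beta_reduce; rw [if_pos rfl, if_neg (show ¬(0 + 1 = 0 ∨ 0 + 1 = n - 1) by omega), hf2]
    · have hi0 : i ≠ 0 := Nat.pos_iff_ne_zero.mp hpos
      by_cases hin : i = n - 2
      · refine ⟨?_, ?_⟩
        · beta_reduce; rw [if_neg hi0, if_pos hin, if_neg (show ¬(i = 0 ∨ i = n - 1) by omega), hh1]
        · beta_reduce; rw [if_neg hi0, if_pos hin,
            if_pos (show i + 1 = 0 ∨ i + 1 = n - 1 from Or.inr (by omega)), hh2]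
      · refine ⟨?_, ?_⟩
        · beta_reduce; rw [if_neg hi0, if_neg hin, if_neg (show ¬(i = 0 ∨ i = n - 1) by omega), hg1]
        · beta_reduce; rw [if_neg hi0, if_neg hin,
            if_neg (show ¬(i + 1 = 0 ∨ i + 1 = n - 1) by omega), hg2]

/-- Loop transfer the other way: an edge `x → y` plus a loop at `x` yields a
loop at `y`. -/
lemma loopTransfer' (n : ℕ) (hn : 3 ≤ n) (J : Quiv) (hJ : PhiInj n J)
    {x y : J.V} (hxy : J.Edge x y) (hxx : J.Edge x x) : J.Edge y y := by
  obtain ⟨f, hf1, hf2⟩ := hxy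
  obtain ⟨g, hg1, hg2⟩ := hxx
  -- first get an edge y → x via a walk x → x → ⋯ → x → y
  have hyx : J.Edge y x := by
    have key := walkEdge n hn J hJ (fun i => if i = n - 1 then y else x)
      (fun i => if i = n - 2 then f else g) ?_
    · simpa [show (0 : ℕ) ≠ n - 1 by omega] using key
    · intro i hi
      by_cases hin : i = n - 2
      · refine ⟨?_, ?_⟩
        · beta_reduce; rw [if_pos hin, if_neg (show ¬ i = n - 1 by omega), hf1]
        · beta_reduce; rw [if_pos hin, if_pos (show i + 1 = n - 1 by omega), hf2]
      · refine ⟨?_, ?_⟩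
        · beta_reduce; rw [if_neg hin, if_neg (show ¬ i = n - 1 by omega), hg1]
        · beta_reduce; rw [if_neg hin, if_neg (show ¬ i + 1 = n - 1 by omega), hg2]
  exact loopTransfer n hn J hJ hyx ⟨g, hg1, hg2⟩

/-- Composition: edges `b → c`, `c → a` and a loop at `a` yield an edge
`a → b`. -/
lemma edgeComp (n : ℕ) (hn : 3 ≤ n) (J : Quiv) (hJ : PhiInj n J)
    {a b c : J.V} (hbc : J.Edge b c) (hca : J.Edge c a) (haa : J.Edge a a) :
    J.Edge a b := by
  obtain ⟨f, hf1, hf2⟩ := hbc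
  obtain ⟨g, hg1, hg2⟩ := hca
  obtain ⟨h, hh1, hh2⟩ := haa
  have key := walkEdge n hn J hJ
    (fun i => if i = 0 then b else if i = 1 then c else a)
    (fun i => if i = 0 then f else if i = 1 then g else h) ?_
  · simpa [show n - 1 ≠ 0 by omega, show n - 1 ≠ 1 by omega] using key
  · intro i hi
    match i with
    | 0 => simp [hf1, hf2]
    | 1 => simp [hg1, hg2]
    | (k + 2) => simp [hh1, hh2]

/-- a nonempty `φ_n`-injective quiver (`n ≥ 3`) is loaded iff it
is weakly connected and has a loop. -/
theorem loaded_iff_connected_with_loop (n : ℕ) (hn : 3 ≤ n) (J : Quiv)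
    (hJ : PhiInj n J) (hne : Nonempty J.V) :
    J.Loaded ↔ (J.WeaklyConnected ∧ ∃ f, J.s f = J.t f) := by
  constructor
  · intro hL
    refine ⟨fun a b => Relation.ReflTransGen.single (Or.inl (hL a b)), ?_⟩
    obtain ⟨z⟩ := hne
    obtain ⟨f, hf1, hf2⟩ := hL z z
    exact ⟨f, hf1.trans hf2.symm⟩
  · rintro ⟨hc, f, hf⟩
    set z := J.s f with hz
    have hzz : J.Edge z z := ⟨f, rfl, hf.symm⟩
    -- every vertex has a loop
    have loops : ∀ x, J.Edge x x := by
      intro x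
      induction hc z x with
      | refl => exact hzz
      | tail _ hstep ih =>
        rcases hstep with hcb | hbc
        · exact loopTransfer' n hn J hJ hcb ih
        · exact loopTransfer n hn J hJ hbc ih
    intro a b
    induction hc a b with
    | refl => exact loops a
    | @tail c b _ hstep ih =>
      have hbc : J.Edge b c := by
        rcases hstep with hcb | hbc
        · exact edgeSym n hn J hJ hcb (loops b)
        · exact hbc
      have hca : J.Edge c a := edgeSym n hn J hJ ih (loops c)
      exact edgeComp n hn J hJ hbc hca (loops a)
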